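/- Let (X, f_X), (Y, f_Y) and (Ỹ, f_Ỹ) be spaces under A, and let (φ, ψ, G, H, K, L) be a homotopy equivalence from (Y, f_Y) to (Ỹ, f_Ỹ). Define Φ : Map_f^h(X,Y) → Map_f^h(X,Ỹ) by Φ(g,F) = (φ∘g, K·(φ∘F)) and Ψ : Map_f^h(X,Ỹ) → Map_f^h(X,Y) by Ψ(g̃,F̃) = (ψ∘g̃, L·(ψ∘F̃)). Then Φ and Ψ are well-defined continuous maps and are inverse homotopy equivalences: Ψ∘Φ is homotopic to the identity of Map_f^h(X,Y) and Φ∘Ψ is homotopic to the identity of Map_f^h(X,Ỹ). -/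

import Mathlib

open unitInterval

/-- The set of endpoints `{0,1} × A ⊆ I × A`, used for homotopies rel endpoints. -/
def relEnds (A : Type) [TopologicalSpace A] : Set (I × A) :=
  {p | p.1 = 0 ∨ p.1 = 1}

/-- A homotopy equivalence from `(Y, f_Y)` to `(Ỹ, f_Ỹ)` (spaces under `A`). -/
structure UnderHtpyEquiv {A Y Y' : Type} [TopologicalSpace A] [TopologicalSpace Y]
    [TopologicalSpace Y'] (fY : C(A, Y)) (fY' : C(A, Y')) where
  φ : C(Y, Y')
  ψ : C(Y', Y)
  G : ContinuousMap.Homotopy (ψ.comp φ) (ContinuousMap.id Y)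
  H : ContinuousMap.Homotopy (φ.comp ψ) (ContinuousMap.id Y')
  K : ContinuousMap.Homotopy (φ.comp fY) fY'
  L : ContinuousMap.Homotopy (ψ.comp fY') fY
  rel_left : ContinuousMap.HomotopicRel
    (((ContinuousMap.Homotopy.refl ψ).comp K).trans L).toContinuousMap
    (G.comp (ContinuousMap.Homotopy.refl fY)).toContinuousMap
    (relEnds A)
  rel_right : ContinuousMap.HomotopicRel
    (((ContinuousMap.Homotopy.refl φ).comp L).trans K).toContinuousMap
    (H.comp (ContinuousMap.Homotopy.refl fY')).toContinuousMap
    (relEnds A)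

/-- `Map_f^h(X,Y)`: the space of pairs `(g, F)` where `g : X → Y` is continuous and
`F` is a homotopy from `g ∘ f_X` to `f_Y`, topologized as a subspace of
`C(X,Y) × C(I × A, Y)` with compact-open topologies. -/
abbrev MapH {A X Y : Type} [TopologicalSpace A] [TopologicalSpace X] [TopologicalSpace Y]
    (fX : C(A, X)) (fY : C(A, Y)) : Type :=
  {gH : C(X, Y) × C(I × A, Y) //
    (∀ a, gH.2 (0, a) = gH.1 (fX a)) ∧ ∀ a, gH.2 (1, a) = fY a}

set_option linter.unusedSectionVars false
noncomputable section MapHAux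
namespace MapHAux

open Set ContinuousMap

/-- clamp a real number into `I`. -/
def pr (r : ℝ) : I := Set.projIcc 0 1 zero_le_one r

lemma coe_pr {r : ℝ} (h0 : 0 ≤ r) (h1 : r ≤ 1) : ((pr r : I) : ℝ) = r := by
  simp [pr, Set.projIcc_of_mem zero_le_one ⟨h0, h1⟩]

@[simp] lemma pr_zero : pr 0 = 0 := by
  simp [pr, Set.projIcc_left]

@[simp] lemma pr_one : pr 1 = 1 := by
  simp [pr, Set.projIcc_right]

@[simp] lemma pr_coe (t : I) : pr (t : ℝ) = t := Set.projIcc_val zero_le_one t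

lemma trans_apply_pr {Z W : Type} [TopologicalSpace Z] [TopologicalSpace W] {f₀ f₁ f₂ : C(Z,W)}
    (F : ContinuousMap.Homotopy f₀ f₁) (G : ContinuousMap.Homotopy f₁ f₂) (x : I × Z) :
    (F.trans G) x = if (x.1:ℝ) ≤ 1/2 then F (pr (2*x.1), x.2) else G (pr (2*x.1 - 1), x.2) := rfl

variable {A X Y Y' : Type} [TopologicalSpace A] [TopologicalSpace X] [TopologicalSpace Y]
    [TopologicalSpace Y']

/-- The homotopy component of an element of `MapH`, as a `Homotopy`. -/
def hmt {fX : C(A,X)} {fY : C(A,Y)} (p : MapH fX fY) :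
    ContinuousMap.Homotopy (p.1.1.comp fX) fY := ⟨p.1.2, p.2.1, p.2.2⟩

/-- The reversed under-homotopy-equivalence. -/
def symmEquiv {fY : C(A,Y)} {fY' : C(A,Y')} (E : UnderHtpyEquiv fY fY') :
    UnderHtpyEquiv fY' fY where
  φ := E.ψ
  ψ := E.φ
  G := E.H
  H := E.G
  K := E.L
  L := E.K
  rel_left := E.rel_right
  rel_right := E.rel_left

variable [CompactSpace A] [T2Space A] [CompactSpace X] [T2Space X]
    [CompactSpace Y] [T2Space Y] [CompactSpace Y'] [T2Space Y']
    (fX : C(A, X)) {fY : C(A, Y)} {fY' : C(A, Y')}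

/-- uncurried second component of `Φ`. -/
def phiSnd (E : UnderHtpyEquiv fY fY') (q : MapH fX fY × (I × A)) : Y' :=
  if (q.2.1 : ℝ) ≤ 1/2 then E.φ (q.1.1.2 (pr (2*q.2.1), q.2.2))
  else E.K (pr (2*q.2.1 - 1), q.2.2)

lemma phiSnd_eq (E : UnderHtpyEquiv fY fY') (p : MapH fX fY) (x : I × A) :
    (((ContinuousMap.Homotopy.refl E.φ).comp (hmt p)).trans E.K) x = phiSnd fX E (p, x) := rfl

lemma continuous_phiSnd (E : UnderHtpyEquiv fY fY') : Continuous (phiSnd fX E) := by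
  have hF : Continuous fun q : MapH fX fY × (I × A) => q.1.1.2 :=
    continuous_snd.comp (continuous_subtype_val.comp continuous_fst)
  have ht : Continuous fun q : MapH fX fY × (I × A) => ((q.2.1 : I) : ℝ) :=
    continuous_subtype_val.comp (continuous_fst.comp continuous_snd)
  have ha : Continuous fun q : MapH fX fY × (I × A) => q.2.2 :=
    continuous_snd.comp continuous_snd
  apply Continuous.if_le
  · exact E.φ.continuous.comp <| continuous_eval.comp <| hF.prodMk <|
      ((continuous_projIcc.comp ((continuous_const.mul ht))).prodMk ha)
  · exact E.K.continuous.comp <|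
      ((continuous_projIcc.comp (((continuous_const.mul ht)).sub continuous_const)).prodMk ha)
  · exact ht
  · exact continuous_const
  · rintro ⟨p, t, a⟩ h
    dsimp at h ⊢
    have h2 : 2 * (t:ℝ) = 1 := by linarith
    have h3 : 2 * (t:ℝ) - 1 = 0 := by linarith
    rw [h3, h2, pr_one, pr_zero, p.2.2 a]
    exact (E.K.apply_zero a).symm

/-- The map `Φ`. -/
def Phi (E : UnderHtpyEquiv fY fY') : C(MapH fX fY, MapH fX fY') where
  toFun p := ⟨(E.φ.comp p.1.1,
      (((ContinuousMap.Homotopy.refl E.φ).comp (hmt p)).trans E.K).toContinuousMap),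
    fun a => (((ContinuousMap.Homotopy.refl E.φ).comp (hmt p)).trans E.K).apply_zero a,
    fun a => (((ContinuousMap.Homotopy.refl E.φ).comp (hmt p)).trans E.K).apply_one a⟩
  continuous_toFun := by
    apply Continuous.subtype_mk
    apply Continuous.prodMk
    · exact (ContinuousMap.continuous_postcomp E.φ).comp
        (continuous_fst.comp continuous_subtype_val)
    · apply ContinuousMap.continuous_of_continuous_uncurry
      exact (continuous_phiSnd fX E).congr fun q => (phiSnd_eq fX E q.1 q.2).symm


section Homotopies
variable (E : UnderHtpyEquiv fY fY')

/-- A chosen homotopy rel endpoints witnessing `rel_left`. -/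
def RL : ContinuousMap.HomotopyRel
    (((ContinuousMap.Homotopy.refl E.ψ).comp E.K).trans E.L).toContinuousMap
    (E.G.comp (ContinuousMap.Homotopy.refl fY)).toContinuousMap
    (relEnds A) := E.rel_left.some

lemma c1_apply (u : I) (a : A) :
    (((ContinuousMap.Homotopy.refl E.ψ).comp E.K).trans E.L).toContinuousMap (u, a)
    = if (u:ℝ) ≤ 1/2 then E.ψ (E.K (pr (2*u), a)) else E.L (pr (2*u - 1), a) := rfl

lemma RL_s0 (x : I × A) :
    RL E (0, x) = (((ContinuousMap.Homotopy.refl E.ψ).comp E.K).trans E.L).toContinuousMap x :=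
  (RL E).apply_zero x

lemma RL_s1 (x : I × A) : RL E (1, x) = E.G (x.1, fY x.2) :=
  (RL E).apply_one x

lemma RL_zero_end (s : I) (a : A) : RL E (s, ((0:I), a)) = E.ψ (E.φ (fY a)) := by
  rw [(RL E).eq_fst s (Or.inl rfl : ((0:I), a) ∈ relEnds A)]
  exact (((ContinuousMap.Homotopy.refl E.ψ).comp E.K).trans E.L).apply_zero a

lemma RL_one_end (s : I) (a : A) : RL E (s, ((1:I), a)) = fY a := by
  rw [(RL E).eq_fst s (Or.inr rfl : ((1:I), a) ∈ relEnds A)]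
  exact (((ContinuousMap.Homotopy.refl E.ψ).comp E.K).trans E.L).apply_one a

/-- the reparametrization used in the first stage. -/
def sig (s t : ℝ) : ℝ := (1-s) * min (2*t - 1/2) t + s * ((4*t-1)/3)

/-- uncurried second component of the first-stage homotopy. -/
def d1 (q : (I × MapH fX fY) × (I × A)) : Y :=
  if 4 * ((q.2.1 : I) : ℝ) ≤ 1 then E.ψ (E.φ (q.1.2.1.2 (pr (4*q.2.1), q.2.2)))
  else RL E (q.1.1, (pr (sig q.1.1 q.2.1), q.2.2))

lemma continuous_d1 : Continuous (d1 fX E) := by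
  have hF : Continuous fun q : (I × MapH fX fY) × (I × A) => q.1.2.1.2 :=
    continuous_snd.comp (continuous_subtype_val.comp (continuous_snd.comp continuous_fst))
  have ht : Continuous fun q : (I × MapH fX fY) × (I × A) => ((q.2.1 : I) : ℝ) :=
    continuous_subtype_val.comp (continuous_fst.comp continuous_snd)
  have ha : Continuous fun q : (I × MapH fX fY) × (I × A) => q.2.2 :=
    continuous_snd.comp continuous_snd
  have hs : Continuous fun q : (I × MapH fX fY) × (I × A) => q.1.1 :=
    continuous_fst.comp continuous_fst
  have hsR : Continuous fun q : (I × MapH fX fY) × (I × A) => ((q.1.1 : I) : ℝ) :=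
    continuous_subtype_val.comp hs
  have hsig : Continuous fun q : (I × MapH fX fY) × (I × A) => sig q.1.1 q.2.1 := by
    apply Continuous.add
    · exact (continuous_const.sub hsR).mul
        (((continuous_const.mul ht).sub continuous_const).min ht)
    · exact hsR.mul (((continuous_const.mul ht).sub continuous_const).div_const 3)
  apply Continuous.if_le
  · exact E.ψ.continuous.comp <| E.φ.continuous.comp <| continuous_eval.comp <| hF.prodMk <|
      (continuous_projIcc.comp (continuous_const.mul ht)).prodMk ha
  · exact (RL E).continuous.comp <| hs.prodMk <|
      (continuous_projIcc.comp hsig).prodMk ha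
  · exact continuous_const.mul ht
  · exact continuous_const
  · rintro ⟨⟨s, p⟩, t, a⟩ h
    dsimp at h ⊢
    have ht4 : (t:ℝ) = 1/4 := by linarith
    have h1 : 4 * (t:ℝ) = 1 := by linarith
    have h2 : sig (s:ℝ) (t:ℝ) = 0 := by
      rw [sig, ht4]
      norm_num
    rw [h1, h2, pr_one, pr_zero, p.2.2 a, RL_zero_end]

/-- the bundled version -/
def d1cm : C((I × MapH fX fY) × (I × A), Y) := ⟨d1 fX E, continuous_d1 fX E⟩

/-- the first-stage homotopy, as a function into `MapH`. -/
def theta1fun (q : I × MapH fX fY) : MapH fX fY :=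
  ⟨(E.ψ.comp (E.φ.comp q.2.1.1), (d1cm fX E).curry q), by
    intro a
    show d1 fX E (q, ((0:I), a)) = _
    rw [d1]
    have hc : ((0:I):ℝ) = 0 := rfl
    rw [if_pos (by rw [hc]; norm_num)]
    have : (4 : ℝ) * ((0:I):ℝ) = 0 := by rw [hc]; ring
    rw [this, pr_zero, q.2.2.1 a]
    rfl, by
    intro a
    show d1 fX E (q, ((1:I), a)) = _
    rw [d1]
    have hc : ((1:I):ℝ) = 1 := rfl
    rw [if_neg (by rw [hc]; norm_num)]
    have h2 : sig (q.1:ℝ) ((1:I):ℝ) = 1 := by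
      rw [sig, hc]
      have : min (2*(1:ℝ) - 1/2) 1 = 1 := by norm_num
      rw [this]
      ring
    rw [h2, pr_one, RL_one_end]⟩

lemma continuous_theta1fun : Continuous (theta1fun fX E) := by
  apply Continuous.subtype_mk
  apply Continuous.prodMk
  · exact (ContinuousMap.continuous_postcomp E.ψ).comp <|
      (ContinuousMap.continuous_postcomp E.φ).comp <|
      continuous_fst.comp (continuous_subtype_val.comp continuous_snd)
  · exact (ContinuousMap.curry (d1cm fX E)).continuous

/-- the intermediate map of the composite homotopy. -/
def midMap : C(MapH fX fY, MapH fX fY) :=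
  ⟨fun p => theta1fun fX E (1, p), (continuous_theta1fun fX E).comp (Continuous.prodMk_right 1)⟩

/-- first stage: `Ψ ∘ Φ` is homotopic to `midMap`. -/
def Theta1 : ContinuousMap.Homotopy
    ((Phi fX (symmEquiv E)).comp (Phi fX E)) (midMap fX E) where
  toFun := theta1fun fX E
  continuous_toFun := continuous_theta1fun fX E
  map_one_left _ := rfl
  map_zero_left p := by
    apply Subtype.ext
    apply Prod.ext
    · rfl
    · apply ContinuousMap.ext
      rintro ⟨t, a⟩
      have ht0 := t.2.1
      have ht1 := t.2.2
      show d1 fX E ((0, p), (t, a)) = phiSnd fX (symmEquiv E) ((Phi fX E) p, (t, a))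
      have hval : ∀ z : I × A, ((Phi fX E p : MapH fX fY').1.2) z = phiSnd fX E (p, z) :=
        fun _ => rfl
      rw [d1, phiSnd]
      dsimp only
      rw [hval, phiSnd]
      dsimp only
      by_cases h1 : 4 * (t:ℝ) ≤ 1
      · have h2 : (t:ℝ) ≤ 1/2 := by linarith
        rw [if_pos h1, if_pos h2]
        have hc : ((pr (2*(t:ℝ)) : I) : ℝ) = 2*t := coe_pr (by linarith) (by linarith)
        rw [hc, if_pos (by linarith : 2*(t:ℝ) ≤ 1/2)]
        have : (2:ℝ) * (2*(t:ℝ)) = 4*t := by ring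
        rw [this]
        rfl
      · rw [if_neg h1]
        have hc0 : ((0:I):ℝ) = 0 := rfl
        rw [RL_s0, c1_apply]
        by_cases h2 : (t:ℝ) ≤ 1/2
        · rw [if_pos h2]
          have hc : ((pr (2*(t:ℝ)) : I) : ℝ) = 2*t := coe_pr (by linarith) (by linarith)
          rw [hc, if_neg (by linarith : ¬ (2*(t:ℝ) ≤ 1/2))]
          have hsg : sig ((0:I):ℝ) (t:ℝ) = 2*t - 1/2 := by
            rw [sig, hc0]
            have : min (2*(t:ℝ) - 1/2) t = 2*t - 1/2 := min_eq_left (by linarith)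
            rw [this]
            ring
          rw [hsg]
          have hcc : ((pr (2*(t:ℝ) - 1/2) : I) : ℝ) = 2*t - 1/2 :=
            coe_pr (by linarith) (by linarith)
          rw [if_pos (by rw [hcc]; linarith), hcc]
          have : (2:ℝ) * (2*(t:ℝ) - 1/2) = 2*(2*(t:ℝ)) - 1 := by ring
          rw [this]
          rfl
        · rw [if_neg h2]
          have hsg : sig ((0:I):ℝ) (t:ℝ) = (t:ℝ) := by
            rw [sig, hc0]
            have : min (2*(t:ℝ) - 1/2) t = t := min_eq_right (by linarith)
            rw [this]
            ring
          rw [hsg, pr_coe, if_neg h2]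
          rfl

/-- uncurried second component of the second-stage homotopy. -/
def d2 (q : (I × MapH fX fY) × (I × A)) : Y :=
  if 4 * ((q.2.1 : I) : ℝ) ≤ 1 + 3 * ((q.1.1 : I) : ℝ) then
    E.G (q.1.1, q.1.2.1.2 (pr (4*q.2.1 / (1 + 3*q.1.1)), q.2.2))
  else E.G (pr (q.1.1 + (4*q.2.1 - 1 - 3*q.1.1)/3), fY q.2.2)

lemma continuous_d2 : Continuous (d2 fX E) := by
  have hF : Continuous fun q : (I × MapH fX fY) × (I × A) => q.1.2.1.2 :=
    continuous_snd.comp (continuous_subtype_val.comp (continuous_snd.comp continuous_fst))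
  have ht : Continuous fun q : (I × MapH fX fY) × (I × A) => ((q.2.1 : I) : ℝ) :=
    continuous_subtype_val.comp (continuous_fst.comp continuous_snd)
  have ha : Continuous fun q : (I × MapH fX fY) × (I × A) => q.2.2 :=
    continuous_snd.comp continuous_snd
  have hs : Continuous fun q : (I × MapH fX fY) × (I × A) => q.1.1 :=
    continuous_fst.comp continuous_fst
  have hsR : Continuous fun q : (I × MapH fX fY) × (I × A) => ((q.1.1 : I) : ℝ) :=
    continuous_subtype_val.comp hs
  have hden : Continuous fun q : (I × MapH fX fY) × (I × A) => 1 + 3 * ((q.1.1 : I) : ℝ) :=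
    continuous_const.add (continuous_const.mul hsR)
  apply Continuous.if_le
  · refine (E.G.continuous).comp <| hs.prodMk <| continuous_eval.comp <| hF.prodMk <|
      (continuous_projIcc.comp ?_).prodMk ha
    exact (continuous_const.mul ht).div hden fun q =>
      ne_of_gt (by have h := q.1.1.2.1; linarith)
  · exact (E.G.continuous).comp <|
      (continuous_projIcc.comp (hsR.add ((((continuous_const.mul ht).sub
        continuous_const).sub (continuous_const.mul hsR)).div_const 3))).prodMk
      (fY.continuous.comp ha)
  · exact continuous_const.mul ht
  · exact hden
  · rintro ⟨⟨s, p⟩, t, a⟩ h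
    dsimp at h ⊢
    have hpos : (0:ℝ) < 1 + 3 * (s:ℝ) := by have := s.2.1; linarith
    have hdiv : 4 * (t:ℝ) / (1 + 3 * (s:ℝ)) = 1 := by
      rw [h]
      exact div_self (ne_of_gt hpos)
    have hzero : (s:ℝ) + (4 * (t:ℝ) - 1 - 3 * (s:ℝ))/3 = (s:ℝ) := by
      rw [show 4 * (t:ℝ) - 1 - 3 * (s:ℝ) = 0 by linarith]
      ring
    rw [hdiv, hzero, pr_one, pr_coe, p.2.2 a]

/-- the bundled version -/
def d2cm : C((I × MapH fX fY) × (I × A), Y) := ⟨d2 fX E, continuous_d2 fX E⟩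

/-- the second-stage homotopy, as a function into `MapH`. -/
def theta2fun (q : I × MapH fX fY) : MapH fX fY :=
  ⟨((E.G.curry q.1).comp q.2.1.1, (d2cm fX E).curry q), by
    intro a
    show d2 fX E (q, ((0:I), a)) = _
    rw [d2]
    have hc : ((0:I):ℝ) = 0 := rfl
    have hs0 := q.1.2.1
    rw [if_pos (by rw [hc]; linarith)]
    have h4 : (4:ℝ) * ((0:I):ℝ) / (1 + 3 * ((q.1:I):ℝ)) = 0 := by
      rw [hc]
      simp
    rw [h4, pr_zero, q.2.2.1 a]
    rfl, by
    intro a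
    show d2 fX E (q, ((1:I), a)) = fY a
    rw [d2]
    have hc : ((1:I):ℝ) = 1 := rfl
    have hs1 := q.1.2.2
    by_cases h : 4 * ((1:I):ℝ) ≤ 1 + 3 * ((q.1:I):ℝ)
    · rw [if_pos h]
      have hs : ((q.1:I):ℝ) = 1 := by rw [hc] at h; linarith
      have h4 : (4:ℝ) * ((1:I):ℝ) / (1 + 3 * ((q.1:I):ℝ)) = 1 := by
        rw [hc, hs]; norm_num
      have hq1 : q.1 = (1:I) := Subtype.ext hs
      rw [h4, pr_one, q.2.2.2 a, hq1]
      exact E.G.apply_one (fY a)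
    · rw [if_neg h]
      have h5 : ((q.1:I):ℝ) + (4 * ((1:I):ℝ) - 1 - 3 * ((q.1:I):ℝ))/3 = 1 := by
        rw [hc]; ring
      rw [h5, pr_one]
      exact E.G.apply_one (fY a)⟩

lemma continuous_theta2fun : Continuous (theta2fun fX E) := by
  apply Continuous.subtype_mk
  apply Continuous.prodMk
  · exact Continuous.compCM ((E.G.toContinuousMap.curry.continuous).comp continuous_fst)
      (continuous_fst.comp (continuous_subtype_val.comp continuous_snd))
  · exact (ContinuousMap.curry (d2cm fX E)).continuous

/-- second stage: `midMap` is homotopic to the identity. -/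
def Theta2 : ContinuousMap.Homotopy (midMap fX E) (ContinuousMap.id (MapH fX fY)) where
  toFun := theta2fun fX E
  continuous_toFun := continuous_theta2fun fX E
  map_zero_left p := by
    apply Subtype.ext
    apply Prod.ext
    · apply ContinuousMap.ext
      intro x
      exact E.G.apply_zero (p.1.1 x)
    · apply ContinuousMap.ext
      rintro ⟨t, a⟩
      have ht0 := t.2.1
      have ht1 := t.2.2
      show d2 fX E ((0, p), (t, a)) = d1 fX E ((1, p), (t, a))
      rw [d2, d1]
      dsimp only
      have hc0 : ((0:I):ℝ) = 0 := rfl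
      have hc1 : ((1:I):ℝ) = 1 := rfl
      have hcond : (1:ℝ) + 3 * ((0:I):ℝ) = 1 := by rw [hc0]; ring
      rw [hcond]
      by_cases h : 4 * (t:ℝ) ≤ 1
      · rw [if_pos h, if_pos h]
        have h4 : 4 * (t:ℝ) / 1 = 4 * (t:ℝ) := by ring
        rw [h4]
        exact E.G.apply_zero (p.1.2 (pr (4*(t:ℝ)), a))
      · rw [if_neg h, if_neg h]
        have hsg : sig ((1:I):ℝ) (t:ℝ) = (4*(t:ℝ) - 1)/3 := by
          rw [sig, hc1]; ring
        have harg : ((0:I):ℝ) + (4 * (t:ℝ) - 1 - 3 * ((0:I):ℝ))/3 = (4*(t:ℝ) - 1)/3 := by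
          rw [hc0]; ring
        rw [harg, RL_s1, hsg]
  map_one_left p := by
    apply Subtype.ext
    apply Prod.ext
    · apply ContinuousMap.ext
      intro x
      exact E.G.apply_one (p.1.1 x)
    · apply ContinuousMap.ext
      rintro ⟨t, a⟩
      have ht1 := t.2.2
      show d2 fX E ((1, p), (t, a)) = p.1.2 (t, a)
      rw [d2]
      have hc1 : ((1:I):ℝ) = 1 := rfl
      rw [if_pos (by rw [hc1]; linarith)]
      have h4 : 4 * (t:ℝ) / (1 + 3 * ((1:I):ℝ)) = (t:ℝ) := by
        rw [hc1]; field_simp; ring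
      rw [h4, pr_coe]
      exact E.G.apply_one (p.1.2 (t, a))

lemma psiPhi_homotopic :
    ((Phi fX (symmEquiv E)).comp (Phi fX E)).Homotopic (ContinuousMap.id (MapH fX fY)) :=
  ⟨(Theta1 fX E).trans (Theta2 fX E)⟩

end Homotopies

end MapHAux
end MapHAux

/-- Given a homotopy equivalence `(φ, ψ, G, H, K, L)` from `(Y, f_Y)` to `(Ỹ, f_Ỹ)`, the
maps `Φ(g,F) = (φ∘g, K·(φ∘F))` and `Ψ(g̃,F̃) = (ψ∘g̃, L·(ψ∘F̃))` are well-defined continuous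
maps `Map_f^h(X,Y) ⇄ Map_f^h(X,Ỹ)` and are inverse homotopy equivalences. -/
theorem mapH_homotopyEquiv_of_underHtpyEquiv
    {A X Y Y' : Type} [TopologicalSpace A] [TopologicalSpace X] [TopologicalSpace Y]
    [TopologicalSpace Y']
    [CompactSpace A] [T2Space A] [CompactSpace X] [T2Space X]
    [CompactSpace Y] [T2Space Y] [CompactSpace Y'] [T2Space Y']
    (fX : C(A, X)) (fY : C(A, Y)) (fY' : C(A, Y'))
    (E : UnderHtpyEquiv fY fY') :
    ∃ (Φ : C(MapH fX fY, MapH fX fY')) (Ψ : C(MapH fX fY', MapH fX fY)),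
      (∀ p : MapH fX fY,
        (Φ p).1.1 = E.φ.comp p.1.1 ∧
        (Φ p).1.2 =
          (((ContinuousMap.Homotopy.refl E.φ).comp
            (⟨p.1.2, p.2.1, p.2.2⟩ : ContinuousMap.Homotopy (p.1.1.comp fX) fY)).trans E.K).toContinuousMap) ∧
      (∀ q : MapH fX fY',
        (Ψ q).1.1 = E.ψ.comp q.1.1 ∧
        (Ψ q).1.2 =
          (((ContinuousMap.Homotopy.refl E.ψ).comp
            (⟨q.1.2, q.2.1, q.2.2⟩ : ContinuousMap.Homotopy (q.1.1.comp fX) fY')).trans E.L).toContinuousMap) ∧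
      (Ψ.comp Φ).Homotopic (ContinuousMap.id _) ∧
      (Φ.comp Ψ).Homotopic (ContinuousMap.id _) := by
  refine ⟨MapHAux.Phi fX E, MapHAux.Phi fX (MapHAux.symmEquiv E),
    fun p => ⟨rfl, rfl⟩, fun q => ⟨rfl, rfl⟩,
    MapHAux.psiPhi_homotopic fX E, ?_⟩
  exact MapHAux.psiPhi_homotopic fX (MapHAux.symmEquiv E)
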